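/- Assume D ≥ 1 and that Γ^1 is the identity N×N matrix (Γ^1_{αβ} = δ_{αβ}), a normalization available when the Γ-matrices are nondegenerate. In YM_0 write a_i, f_j, s^α for the images of A_i, φ_j, ψ^α, and set q_i = a_{i+1} and p^i = [a_1, a_{i+1}] for 1 ≤ i ≤ D−1, and P^j = [a_1, f_j] for 1 ≤ j ≤ d'. Let S ⊆ YM_0 be the unital subalgebra generated by all q_i, p^i, f_j, P^j, s^α. Then the inner derivation ad(a_1) = [a_1, ·] of YM_0 maps S into itself, i.e. [a_1, x] ∈ S for every x ∈ S. -/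

import Mathlib

open scoped BigOperators

noncomputable section

/-- Generators of the free algebra: `A_1, …, A_D`, `φ_1, …, φ_{d'}`, `ψ^1, …, ψ^N`. -/
abbrev YMVar (D d' N : ℕ) := Fin D ⊕ (Fin d' ⊕ Fin N)

/-- The free unital associative ℂ-algebra on the Yang–Mills generators. -/
abbrev YMFree (D d' N : ℕ) := FreeAlgebra ℂ (YMVar D d' N)

variable {D d' N : ℕ}

/-- The generator `A_i`. -/
def ymA (i : Fin D) : YMFree D d' N := FreeAlgebra.ι ℂ (Sum.inl i)

/-- The generator `φ_j`. -/
def ymPhi (j : Fin d') : YMFree D d' N := FreeAlgebra.ι ℂ (Sum.inr (Sum.inl j))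

/-- The generator `ψ^α`. -/
def ymPsi (α : Fin N) : YMFree D d' N := FreeAlgebra.ι ℂ (Sum.inr (Sum.inr α))

/-- Commutator `[a,b] = ab - ba`. -/
def ymBr (a b : YMFree D d' N) : YMFree D d' N := a * b - b * a

/-- The subalgebra of `YMFree` generated by the matter generators `φ_j, ψ^α`. -/
def ymMatter (D d' N : ℕ) : Subalgebra ℂ (YMFree D d' N) :=
  Algebra.adjoin ℂ
    (Set.range fun y : Fin d' ⊕ Fin N => (FreeAlgebra.ι ℂ (Sum.inr y) : YMFree D d' N))

/-- The Yang–Mills relation element `r_m`. -/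
def ymR (Γ : Fin D → Matrix (Fin N) (Fin N) ℂ) (m : Fin D) : YMFree D d' N :=
  (∑ i, ymBr (ymA i) (ymBr (ymA i) (ymA m)))
    + (∑ j, ymBr (ymPhi j) (ymBr (ymPhi j) (ymA m)))
    - (1 / 2 : ℂ) • ∑ α, ∑ β, Γ m α β • (ymPsi α * ymPsi β + ymPsi β * ymPsi α)

/-- The Yang–Mills relation element `r'_j`. -/
def ymR' (u : Fin d' → YMFree D d' N) (j : Fin d') : YMFree D d' N :=
  (∑ i, ymBr (ymA i) (ymBr (ymA i) (ymPhi j))) + u j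

/-- The Yang–Mills relation element `r''_α`. -/
def ymR'' (Γ : Fin D → Matrix (Fin N) (Fin N) ℂ) (v : Fin N → YMFree D d' N)
    (α : Fin N) : YMFree D d' N :=
  (∑ i, ∑ β, Γ i α β • ymBr (ymA i) (ymPsi β)) + v α

/-- The relation identifying all Yang–Mills relation elements with `0`. -/
def ymRel (Γ : Fin D → Matrix (Fin N) (Fin N) ℂ) (u : Fin d' → YMFree D d' N)
    (v : Fin N → YMFree D d' N) : YMFree D d' N → YMFree D d' N → Prop :=
  fun a b => ((∃ m, a = ymR Γ m) ∨ (∃ j, a = ymR' u j) ∨ (∃ α, a = ymR'' Γ v α)) ∧ b = 0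

/-- The Yang–Mills algebra `YM₀`: the quotient of the free algebra by the two-sided ideal
generated by the Yang–Mills relation elements. -/
abbrev YMQuot (Γ : Fin D → Matrix (Fin N) (Fin N) ℂ) (u : Fin d' → YMFree D d' N)
    (v : Fin N → YMFree D d' N) := RingQuot (ymRel Γ u v)

/-- The quotient map `F → YM₀`. -/
def ymPi (Γ : Fin D → Matrix (Fin N) (Fin N) ℂ) (u : Fin d' → YMFree D d' N)
    (v : Fin N → YMFree D d' N) : YMFree D d' N →ₐ[ℂ] YMQuot Γ u v :=
  RingQuot.mkAlgHom ℂ (ymRel Γ u v)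

end

noncomputable section

variable {D d' N : ℕ}

/-- The generating set `{q_i} ∪ {p^i} ∪ {f_j} ∪ {P^j} ∪ {s^α}` of the subalgebra `S ⊆ YM₀`,
where `q_i = a_{i+1}`, `p^i = [a_1, a_{i+1}]`, `P^j = [a_1, f_j]`. -/
def ymSGen (Γ : Fin D → Matrix (Fin N) (Fin N) ℂ) (u : Fin d' → YMFree D d' N)
    (v : Fin N → YMFree D d' N) (hD : 0 < D) : Set (YMQuot Γ u v) :=
  (Set.range fun i : Fin (D - 1) =>
      ymPi Γ u v (ymA ⟨(i : ℕ) + 1, by have := i.2; omega⟩))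
    ∪ (Set.range fun i : Fin (D - 1) =>
      ymPi Γ u v (ymBr (ymA ⟨0, hD⟩) (ymA ⟨(i : ℕ) + 1, by have := i.2; omega⟩)))
    ∪ (Set.range fun j : Fin d' => ymPi Γ u v (ymPhi j))
    ∪ (Set.range fun j : Fin d' => ymPi Γ u v (ymBr (ymA ⟨0, hD⟩) (ymPhi j)))
    ∪ (Set.range fun α : Fin N => ymPi Γ u v (ymPsi α))

end

/-- assume `D ≥ 1` and `Γ^1 = Id`.  Then the inner derivation `[a_1, ·]`
of `YM₀` maps the unital subalgebra `S` generated by all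
`q_i, p^i, f_j, P^j, s^α` into itself. -/
theorem statement13
    (D d' N : ℕ) (hD : 0 < D)
    (Γ : Fin D → Matrix (Fin N) (Fin N) ℂ)
    (u : Fin d' → YMFree D d' N) (v : Fin N → YMFree D d' N)
    (hu : ∀ j, u j ∈ ymMatter D d' N) (hv : ∀ α, v α ∈ ymMatter D d' N)
    (hΓ1 : Γ ⟨0, hD⟩ = (1 : Matrix (Fin N) (Fin N) ℂ)) :
    ∀ x ∈ Algebra.adjoin ℂ (ymSGen Γ u v hD),
      ymPi Γ u v (ymA ⟨0, hD⟩) * x - x * ymPi Γ u v (ymA ⟨0, hD⟩)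
        ∈ Algebra.adjoin ℂ (ymSGen Γ u v hD) := by

  classical
  intro x hx
  set π := ymPi Γ u v with hπdef
  set z0 : Fin D := ⟨0, hD⟩ with hz0
  set S := Algebra.adjoin ℂ (ymSGen Γ u v hD) with hSdef
  -- generator memberships
  have hq : ∀ m : Fin D, m ≠ z0 → π (ymA m) ∈ S := by
    intro m hm
    have hm' : (m : ℕ) ≠ 0 := fun h => hm (Fin.ext h)
    have h1 : (m : ℕ) - 1 < D - 1 := by have := m.2; omega
    have he : ∀ (h : ((⟨(m : ℕ) - 1, h1⟩ : Fin (D - 1)) : ℕ) + 1 < D),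
        (⟨((⟨(m : ℕ) - 1, h1⟩ : Fin (D - 1)) : ℕ) + 1, h⟩ : Fin D) = m := fun h =>
      Fin.ext (by simp only [Fin.val_mk]; omega)
    apply Algebra.subset_adjoin
    refine Or.inl (Or.inl (Or.inl (Or.inl ⟨⟨(m : ℕ) - 1, h1⟩, ?_⟩)))
    beta_reduce
    rw [he]
  have hp : ∀ m : Fin D, m ≠ z0 → π (ymBr (ymA z0) (ymA m)) ∈ S := by
    intro m hm
    have hm' : (m : ℕ) ≠ 0 := fun h => hm (Fin.ext h)
    have h1 : (m : ℕ) - 1 < D - 1 := by have := m.2; omega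
    have he : ∀ (h : ((⟨(m : ℕ) - 1, h1⟩ : Fin (D - 1)) : ℕ) + 1 < D),
        (⟨((⟨(m : ℕ) - 1, h1⟩ : Fin (D - 1)) : ℕ) + 1, h⟩ : Fin D) = m := fun h =>
      Fin.ext (by simp only [Fin.val_mk]; omega)
    apply Algebra.subset_adjoin
    refine Or.inl (Or.inl (Or.inl (Or.inr ⟨⟨(m : ℕ) - 1, h1⟩, ?_⟩)))
    beta_reduce
    rw [he]
  have hphi : ∀ j : Fin d', π (ymPhi j) ∈ S := fun j =>
    Algebra.subset_adjoin (Or.inl (Or.inl (Or.inr ⟨j, rfl⟩)))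
  have hPphi : ∀ j : Fin d', π (ymBr (ymA z0) (ymPhi j)) ∈ S := fun j =>
    Algebra.subset_adjoin (Or.inl (Or.inr ⟨j, rfl⟩))
  have hpsi : ∀ α : Fin N, π (ymPsi α) ∈ S := fun α =>
    Algebra.subset_adjoin (Or.inr ⟨α, rfl⟩)
  -- matter elements map into S
  have hmatter : ∀ w ∈ ymMatter D d' N, π w ∈ S := by
    intro w hw
    induction hw using Algebra.adjoin_induction with
    | mem y hy =>
      obtain ⟨t, rfl⟩ := hy
      cases t with
      | inl j => exact hphi j
      | inr α => exact hpsi α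
    | algebraMap r => rw [AlgHom.commutes]; exact Subalgebra.algebraMap_mem _ r
    | add a b _ _ ha hb => rw [map_add]; exact add_mem ha hb
    | mul a b _ _ ha hb => rw [map_mul]; exact mul_mem ha hb
  -- relations vanish in the quotient
  have hR0 : ∀ m : Fin D, π (ymR Γ m) = 0 := by
    intro m
    have h := RingQuot.mkAlgHom_rel ℂ (s := ymRel Γ u v)
      (show ymRel Γ u v (ymR Γ m) 0 from ⟨Or.inl ⟨m, rfl⟩, rfl⟩)
    rw [map_zero] at h; exact h
  have hR'0 : ∀ j : Fin d', π (ymR' u j) = 0 := by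
    intro j
    have h := RingQuot.mkAlgHom_rel ℂ (s := ymRel Γ u v)
      (show ymRel Γ u v (ymR' u j) 0 from ⟨Or.inr (Or.inl ⟨j, rfl⟩), rfl⟩)
    rw [map_zero] at h; exact h
  have hR''0 : ∀ α : Fin N, π (ymR'' Γ v α) = 0 := by
    intro α
    have h := RingQuot.mkAlgHom_rel ℂ (s := ymRel Γ u v)
      (show ymRel Γ u v (ymR'' Γ v α) 0 from ⟨Or.inr (Or.inr ⟨α, rfl⟩), rfl⟩)
    rw [map_zero] at h; exact h
  -- bracket facts
  have hπbr : ∀ a b : YMFree D d' N, π (ymBr a b) = π a * π b - π b * π a := by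
    intro a b; simp [ymBr, map_sub, map_mul]
  have hbrmem : ∀ a b : YMFree D d' N, π a ∈ S → π b ∈ S → π (ymBr a b) ∈ S := by
    intro a b ha hb
    rw [hπbr]
    exact sub_mem (mul_mem ha hb) (mul_mem hb ha)
  -- key 1 : [a₁,[a₁,a_m]] ∈ S for m ≠ z0
  have key1 : ∀ m : Fin D, m ≠ z0 → π (ymBr (ymA z0) (ymBr (ymA z0) (ymA m))) ∈ S := by
    intro m hm
    have e : ymBr (ymA z0) (ymBr (ymA z0) (ymA m))
        = ymR (d' := d') Γ m
          - (∑ i ∈ Finset.univ.erase z0, ymBr (ymA i) (ymBr (ymA i) (ymA m)))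
          - (∑ j, ymBr (ymPhi j) (ymBr (ymPhi j) (ymA m)))
          + (1 / 2 : ℂ) • ∑ α, ∑ β,
              Γ m α β • (ymPsi α * ymPsi β + ymPsi β * ymPsi α) := by
      rw [ymR, ← Finset.add_sum_erase _ _ (Finset.mem_univ z0)]
      abel
    rw [e, map_add, map_sub, map_sub, hR0, map_smul, map_sum, map_sum, map_sum]
    refine add_mem (sub_mem (sub_mem (zero_mem _) (sum_mem ?_)) (sum_mem ?_))
      (Subalgebra.smul_mem _ (sum_mem ?_) _)
    · intro i hi
      have hi' : i ≠ z0 := Finset.ne_of_mem_erase hi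
      exact hbrmem _ _ (hq i hi') (hbrmem _ _ (hq i hi') (hq m hm))
    · intro j _
      exact hbrmem _ _ (hphi j) (hbrmem _ _ (hphi j) (hq m hm))
    · intro α _
      rw [map_sum]
      refine sum_mem fun β _ => ?_
      rw [map_smul]
      refine Subalgebra.smul_mem _ ?_ _
      rw [map_add, map_mul, map_mul]
      exact add_mem (mul_mem (hpsi α) (hpsi β)) (mul_mem (hpsi β) (hpsi α))
  -- key 2 : [a₁,[a₁,f_j]] ∈ S
  have key2 : ∀ j : Fin d', π (ymBr (ymA z0) (ymBr (ymA z0) (ymPhi j))) ∈ S := by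
    intro j
    have e : ymBr (ymA z0) (ymBr (ymA z0) (ymPhi j))
        = ymR' u j
          - (∑ i ∈ Finset.univ.erase z0, ymBr (ymA i) (ymBr (ymA i) (ymPhi j)))
          - u j := by
      rw [ymR', ← Finset.add_sum_erase _ _ (Finset.mem_univ z0)]
      abel
    rw [e, map_sub, map_sub, hR'0, map_sum]
    refine sub_mem (sub_mem (zero_mem _) (sum_mem ?_)) (hmatter _ (hu j))
    intro i hi
    have hi' : i ≠ z0 := Finset.ne_of_mem_erase hi
    exact hbrmem _ _ (hq i hi') (hbrmem _ _ (hq i hi') (hphi j))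
  -- key 3 : [a₁,s^α] ∈ S
  have key3 : ∀ α : Fin N, π (ymBr (ymA z0) (ymPsi α)) ∈ S := by
    intro α
    have hz : (∑ β, Γ z0 α β • ymBr (ymA z0) (ymPsi β) : YMFree D d' N)
        = ymBr (ymA z0) (ymPsi α) := by
      rw [hΓ1]
      simp [Matrix.one_apply, ite_smul]
    have e : ymBr (ymA z0) (ymPsi α)
        = ymR'' Γ v α
          - (∑ i ∈ Finset.univ.erase z0, ∑ β, Γ i α β • ymBr (ymA i) (ymPsi β))
          - v α := by
      rw [ymR'', ← Finset.add_sum_erase _ _ (Finset.mem_univ z0), hz]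
      abel
    rw [e, map_sub, map_sub, hR''0, map_sum]
    refine sub_mem (sub_mem (zero_mem _) (sum_mem ?_)) (hmatter _ (hv α))
    intro i hi
    have hi' : i ≠ z0 := Finset.ne_of_mem_erase hi
    rw [map_sum]
    refine sum_mem fun β _ => ?_
    rw [map_smul]
    exact Subalgebra.smul_mem _ (hbrmem _ _ (hq i hi') (hpsi β)) _
  -- the induction
  induction hx using Algebra.adjoin_induction with
  | mem y hy =>
    rcases hy with ((((⟨i, rfl⟩ | ⟨i, rfl⟩) | ⟨j, rfl⟩) | ⟨j, rfl⟩) | ⟨α, rfl⟩)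
    · have h := hp ⟨(i : ℕ) + 1, by have := i.2; omega⟩ (by
        intro h; exact absurd (congrArg Fin.val h) (by simp))
      rw [hπbr] at h
      exact h
    · have h := key1 ⟨(i : ℕ) + 1, by have := i.2; omega⟩ (by
        intro h; exact absurd (congrArg Fin.val h) (by simp))
      rw [hπbr] at h
      exact h
    · have h := hPphi j
      rw [hπbr] at h
      exact h
    · have h := key2 j
      rw [hπbr] at h
      exact h
    · have h := key3 α
      rw [hπbr] at h
      exact h
  | algebraMap r =>
    rw [Algebra.commutes, sub_self]
    exact zero_mem _
  | add a b ha hb iha ihb =>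
    have e : π (ymA z0) * (a + b) - (a + b) * π (ymA z0)
        = (π (ymA z0) * a - a * π (ymA z0)) + (π (ymA z0) * b - b * π (ymA z0)) := by noncomm_ring
    rw [e]; exact add_mem iha ihb
  | mul a b ha hb iha ihb =>
    have e : π (ymA z0) * (a * b) - (a * b) * π (ymA z0)
        = (π (ymA z0) * a - a * π (ymA z0)) * b + a * (π (ymA z0) * b - b * π (ymA z0)) := by
      simp only [mul_sub, sub_mul, mul_assoc]; abel
    rw [e]; exact add_mem (mul_mem iha hb) (mul_mem ha ihb)
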